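/- arXiv:1307.4302 — 4 statements merged into one kernel-verified Lean document; each statement's English description precedes it below -/
import Mathlib

section
/- Let D_i = [a_i, b_i] ⊆ ℝ^N be a hyperinterval, f differentiable on D_i with gradient K-Lipschitz on D_i, and let K̃ ≥ K. Define F_i = f(a_i) + min_{x ∈ D_i} ⟨f'(a_i), x − a_i⟩ and R_i(K̃) = F_i − (K̃/2)‖b_i − a_i‖². Then R_i(K̃) ≤ f(x) for all x ∈ D_i. -/
open scoped RealInnerProductSpace

theorem characteristic_is_lower_bound
    (N : ℕ) (a b : EuclideanSpace ℝ (Fin N))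
    (D : Set (EuclideanSpace ℝ (Fin N)))
    (hD : D = {x | ∀ j, min (a j) (b j) ≤ x j ∧ x j ≤ max (a j) (b j)})
    (f : EuclideanSpace ℝ (Fin N) → ℝ)
    (f' : EuclideanSpace ℝ (Fin N) → EuclideanSpace ℝ (Fin N))
    (K Ktilde : ℝ) (hK : 0 < K) (hKt : K ≤ Ktilde)
    (hdiff : ∀ x ∈ D, HasGradientAt f (f' x) x)
    (hlip : ∀ x ∈ D, ∀ y ∈ D, ‖f' x - f' y‖ ≤ K * ‖x - y‖)
    (m : ℝ) (hm : IsGLB ((fun x => ⟪f' a, x - a⟫) '' D) m)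
    (F R : ℝ) (hF : F = f a + m) (hR : R = F - Ktilde / 2 * ‖b - a‖ ^ 2) :
    ∀ x ∈ D, R ≤ f x := by
  intro x hx
  subst hF hR
  have haD : a ∈ D := by
    rw [hD]; intro j; exact ⟨min_le_left _ _, le_max_left _ _⟩
  have hxmem : ∀ j, min (a j) (b j) ≤ x j ∧ x j ≤ max (a j) (b j) := by
    rw [hD] at hx; exact hx
  -- the segment from a to x lies in D
  set γ : ℝ → EuclideanSpace ℝ (Fin N) := fun t => a + t • (x - a) with hγ
  have hγD : ∀ t ∈ Set.Icc (0:ℝ) 1, γ t ∈ D := by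
    intro t ht
    rw [hD]
    intro j
    have hj := hxmem j
    have haj1 : min (a j) (b j) ≤ a j := min_le_left _ _
    have haj2 : a j ≤ max (a j) (b j) := le_max_left _ _
    have happ : γ t j = a j + t * (x j - a j) := by
      simp [hγ, smul_eq_mul]
    rw [happ]
    constructor
    · nlinarith [ht.1, ht.2, hj.1, hj.2]
    · nlinarith [ht.1, ht.2, hj.1, hj.2]
  -- coordinatewise bound implies norm bound
  have hxa_le : ‖x - a‖ ≤ ‖b - a‖ := by
    rw [EuclideanSpace.norm_eq, EuclideanSpace.norm_eq]
    apply Real.sqrt_le_sqrt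
    apply Finset.sum_le_sum
    intro j _
    have hj := hxmem j
    have h1 : min (a j) (b j) ≤ a j := min_le_left _ _
    have h2 : a j ≤ max (a j) (b j) := le_max_left _ _
    have h3 : min (a j) (b j) ≤ b j := min_le_right _ _
    have h4 : b j ≤ max (a j) (b j) := le_max_right _ _
    have hsub : (x - a) j = x j - a j := rfl
    have hsub' : (b - a) j = b j - a j := rfl
    rw [hsub, hsub']
    rcases le_total (a j) (b j) with h | h
    · rw [min_eq_left h, max_eq_right h] at hj
      have : |x j - a j| ≤ |b j - a j| := by
        rw [abs_of_nonneg (by linarith [hj.1]), abs_of_nonneg (by linarith)]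
        linarith [hj.2]
      calc ‖x j - a j‖ ^ 2 = |x j - a j| ^ 2 := by rw [Real.norm_eq_abs]
        _ ≤ |b j - a j| ^ 2 := by exact pow_le_pow_left₀ (abs_nonneg _) this 2
        _ = ‖b j - a j‖ ^ 2 := by rw [Real.norm_eq_abs]
    · rw [min_eq_right h, max_eq_left h] at hj
      have : |x j - a j| ≤ |b j - a j| := by
        rw [abs_of_nonpos (by linarith [hj.2]), abs_of_nonpos (by linarith)]
        linarith [hj.1]
      calc ‖x j - a j‖ ^ 2 = |x j - a j| ^ 2 := by rw [Real.norm_eq_abs]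
        _ ≤ |b j - a j| ^ 2 := by exact pow_le_pow_left₀ (abs_nonneg _) this 2
        _ = ‖b j - a j‖ ^ 2 := by rw [Real.norm_eq_abs]
    -- lower bound from GLB
  have hmle : m ≤ ⟪f' a, x - a⟫ := hm.1 ⟨x, hx, rfl⟩
  set c : ℝ := ⟪f' a, x - a⟫ with hc
  set n : ℝ := ‖x - a‖ ^ 2 with hn
  -- descent lemma via monotonicity
  set ψ : ℝ → ℝ := fun t => f (γ t) - c * t + K / 2 * n * t ^ 2 with hψdef
  have hψderiv : ∀ t ∈ Set.Icc (0:ℝ) 1,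
      HasDerivAt ψ (⟪f' (γ t), x - a⟫ - c + K / 2 * n * (2 * t)) t := by
    intro t ht
    have hγ' : HasDerivAt γ (x - a) t := by
      have : HasDerivAt (fun s : ℝ => s • (x - a)) ((1:ℝ) • (x - a)) t :=
        (hasDerivAt_id t).smul_const (x - a)
      simpa [hγ] using this.const_add a
    have hgrad := (hdiff (γ t) (hγD t ht)).hasFDerivAt
    have hcomp : HasDerivAt (fun s => f (γ s)) (⟪f' (γ t), x - a⟫) t := by
      have := hgrad.comp_hasDerivAt t hγ'
      simp [InnerProductSpace.toDual_apply_apply] at this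
      exact this
    have h1 : HasDerivAt (fun s : ℝ => c * s) (c * 1) t := (hasDerivAt_id t).const_mul c
    have h2 : HasDerivAt (fun s : ℝ => K / 2 * n * s ^ 2) (K / 2 * n * (2 * t)) t := by
      have := (hasDerivAt_pow 2 t).const_mul (K / 2 * n)
      simpa [mul_comm] using this
    have := (hcomp.sub h1).add h2
    simp only [mul_one] at this
    exact this
  have hψmono : MonotoneOn ψ (Set.Icc (0:ℝ) 1) := by
    apply monotoneOn_of_hasDerivWithinAt_nonneg (convex_Icc 0 1)
      (f' := fun t => ⟪f' (γ t), x - a⟫ - c + K / 2 * n * (2 * t))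
    · intro t ht
      exact (hψderiv t ht).continuousAt.continuousWithinAt
    · intro t ht
      rw [interior_Icc] at ht
      exact (hψderiv t (Set.Ioo_subset_Icc_self ht)).hasDerivWithinAt
    · intro t ht
      rw [interior_Icc] at ht
      have htD := hγD t (Set.Ioo_subset_Icc_self ht)
      have hlb : -(‖f' (γ t) - f' a‖ * ‖x - a‖) ≤ ⟪f' (γ t) - f' a, x - a⟫ :=
        neg_le_of_abs_le (abs_real_inner_le_norm _ _)
      have hinner : ⟪f' (γ t) - f' a, x - a⟫ = ⟪f' (γ t), x - a⟫ - c := by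
        rw [hc]; exact inner_sub_left _ _ _
      have hnorm : ‖f' (γ t) - f' a‖ ≤ K * (t * ‖x - a‖) := by
        have := hlip (γ t) htD a haD
        have hγa : γ t - a = t • (x - a) := by simp [hγ]
        rw [hγa, norm_smul, Real.norm_eq_abs, abs_of_pos ht.1] at this
        linarith [this]
      have hxa : (0:ℝ) ≤ ‖x - a‖ := norm_nonneg _
      have hsq : ‖x - a‖ * ‖x - a‖ = n := by rw [hn]; ring
      have key : ‖f' (γ t) - f' a‖ * ‖x - a‖ ≤ K * t * n := by
        calc ‖f' (γ t) - f' a‖ * ‖x - a‖ ≤ K * (t * ‖x - a‖) * ‖x - a‖ :=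
              mul_le_mul_of_nonneg_right hnorm hxa
          _ = K * t * (‖x - a‖ * ‖x - a‖) := by ring
          _ = K * t * n := by rw [hsq]
      linarith [hlb, key, hinner.ge, hinner.le]
  have hψ01 : ψ 0 ≤ ψ 1 := hψmono (Set.left_mem_Icc.2 zero_le_one)
      (Set.right_mem_Icc.2 zero_le_one) zero_le_one
  have hγ0 : γ 0 = a := by simp [hγ]
  have hγ1 : γ 1 = x := by simp [hγ]
  have hdescent : f a + c - K / 2 * n ≤ f x := by
    have h0 : ψ 0 = f a := by simp [hψdef, hγ0]
    have h1 : ψ 1 = f x - c + K / 2 * n := by simp [hψdef, hγ1]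
    rw [h0, h1] at hψ01
    linarith
  -- final comparison
  have hsqle : ‖x - a‖ ^ 2 ≤ ‖b - a‖ ^ 2 :=
    pow_le_pow_left₀ (norm_nonneg _) hxa_le 2
  have : Ktilde / 2 * ‖b - a‖ ^ 2 ≥ K / 2 * n := by
    rw [hn]
    nlinarith [sq_nonneg ‖x - a‖]
  linarith [hmle, hdescent]
end

section
/- Let D_t ⊆ ℝ^N be a hyperinterval with squared diagonal d² and suppose it is trisected perpendicularly to its longest side. Then each child hyperinterval has squared diagonal at most (1 − 8/(9N))·d². Consequently the diagonal of each child is at most √(1 − 8/(9N)) times the diagonal of D_t. -/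
theorem trisected_child_diagonal_shrinks
    (N : ℕ) (w : Fin N → ℝ) (t : Fin N)
    (hw : ∀ j, 0 ≤ w j) (hmax : ∀ j, w j ≤ w t) :
    (∑ j, (if j = t then w t / 3 else w j) ^ 2
        ≤ (1 - 8 / (9 * (N : ℝ))) * ∑ j, (w j) ^ 2) ∧
    Real.sqrt (∑ j, (if j = t then w t / 3 else w j) ^ 2)
        ≤ Real.sqrt (1 - 8 / (9 * (N : ℝ))) * Real.sqrt (∑ j, (w j) ^ 2) := by
  have hN : (0:ℝ) < N := by exact_mod_cast t.pos
  have key : ∑ j, (if j = t then w t / 3 else w j) ^ 2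
      = (∑ j, (w j) ^ 2) - (8/9) * (w t) ^ 2 := by
    rw [← Finset.sum_erase_add _ _ (Finset.mem_univ t),
        ← Finset.sum_erase_add Finset.univ (fun j => (w j)^2) (Finset.mem_univ t)]
    rw [Finset.sum_congr rfl (fun j hj => by
      rw [if_neg (Finset.ne_of_mem_erase hj)])]
    simp only [if_true, ite_true]
    ring
  have hsum : ∑ j, (w j) ^ 2 ≤ (N:ℝ) * (w t) ^ 2 := by
    calc ∑ j, (w j) ^ 2 ≤ ∑ _j : Fin N, (w t) ^ 2 :=
          Finset.sum_le_sum (fun j _ => by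
            have := hw j
            have := hmax j
            nlinarith)
      _ = (N:ℝ) * (w t) ^ 2 := by simp [Finset.sum_const, mul_comm]
  have h1 : ∑ j, (if j = t then w t / 3 else w j) ^ 2
      ≤ (1 - 8 / (9 * (N : ℝ))) * ∑ j, (w j) ^ 2 := by
    rw [key]
    have h : 8 / (9 * (N:ℝ)) * ∑ j, (w j) ^ 2 ≤ (8/9) * (w t) ^ 2 := by
      rw [div_mul_eq_mul_div, div_le_iff₀ (by positivity)]
      nlinarith
    nlinarith
  refine ⟨h1, ?_⟩
  have hc : (0:ℝ) ≤ 1 - 8 / (9 * (N:ℝ)) := by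
    have : 8 / (9 * (N:ℝ)) ≤ 8/9 := by
      apply div_le_div_of_nonneg_left (by norm_num) (by norm_num)
      nlinarith [Nat.one_le_cast (α := ℝ) |>.mpr t.pos]
    linarith
  calc Real.sqrt (∑ j, (if j = t then w t / 3 else w j) ^ 2)
      ≤ Real.sqrt ((1 - 8 / (9 * (N : ℝ))) * ∑ j, (w j) ^ 2) := Real.sqrt_le_sqrt h1
    _ = Real.sqrt (1 - 8 / (9 * (N : ℝ))) * Real.sqrt (∑ j, (w j) ^ 2) :=
        Real.sqrt_mul hc _
end

section
/- Consider a sequence of partitions of a hypercube D ⊆ ℝ^N produced by repeatedly trisecting hyperintervals perpendicularly to a longest side. If along any chain of nested hyperintervals D ⊇ D^{(1)} ⊇ D^{(2)} ⊇ … each D^{(k+1)} is a child of D^{(k)} under such a trisection, then the diagonal length of D^{(k)} tends to 0 as k → ∞; in fact it is bounded by (1 − 8/(9N))^{k/2} times the diagonal of D. -/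
open Filter

theorem nested_trisection_diagonals_tend_to_zero
    (N : ℕ) (hN : 0 < N)
    (a b : ℕ → (Fin N → ℝ))
    (w : ℕ → Fin N → ℝ) (hw : ∀ k j, w k j = |b k j - a k j|)
    (hstep : ∀ k, ∃ i : Fin N,
        (∀ j, w k j ≤ w k i) ∧
        (∀ j, w (k + 1) j = if j = i then w k i / 3 else w k j))
    (diag : ℕ → ℝ) (hdiag : ∀ k, diag k = Real.sqrt (∑ j, (w k j) ^ 2)) :
    (∀ k, diag k ≤ Real.sqrt (1 - 8 / (9 * (N : ℝ))) ^ k * diag 0) ∧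
    Tendsto diag atTop (nhds 0) := by
  have hNpos : (0:ℝ) < N := by exact_mod_cast hN
  set c : ℝ := 1 - 8 / (9 * (N : ℝ)) with hc
  have hc0 : 0 ≤ c := by
    have h1 : (1:ℝ) ≤ (N:ℝ) := by exact_mod_cast hN
    have : 8 / (9 * (N:ℝ)) ≤ 8 / 9 := by
      apply div_le_div_of_nonneg_left (by norm_num) (by norm_num)
      nlinarith
    simp only [hc]; linarith
  have hc1 : c < 1 := by
    have : 0 < 8 / (9 * (N:ℝ)) := by positivity
    simp only [hc]; linarith
  set S : ℕ → ℝ := fun k => ∑ j, (w k j) ^ 2 with hS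
  have hSnn : ∀ k, 0 ≤ S k := fun k => Finset.sum_nonneg fun j _ => sq_nonneg _
  have hwnn : ∀ k j, 0 ≤ w k j := fun k j => (hw k j) ▸ abs_nonneg _
  have hstepS : ∀ k, S (k+1) ≤ c * S k := by
    intro k
    obtain ⟨i, hmax, hupd⟩ := hstep k
    have hsplit : S (k+1) = S k - (8/9) * (w k i)^2 := by
      have h1 : S (k+1) = ∑ j, (if j = i then w k i / 3 else w k j)^2 := by
        apply Finset.sum_congr rfl; intro j _; rw [hupd j]
      rw [h1]
      have h2 : ∀ j ∈ Finset.univ, (if j = i then w k i / 3 else w k j)^2 =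
          (w k j)^2 + (if j = i then -(8/9) * (w k i)^2 else 0) := by
        intro j _
        by_cases hj : j = i
        · subst hj; simp; ring
        · simp [hj]
      rw [Finset.sum_congr rfl h2, Finset.sum_add_distrib, Finset.sum_ite_eq' Finset.univ i]
      simp [hS]; ring
    have hbound : S k ≤ N * (w k i)^2 := by
      have : S k ≤ ∑ _j : Fin N, (w k i)^2 := by
        apply Finset.sum_le_sum; intro j _
        exact pow_le_pow_left₀ (hwnn k j) (hmax j) 2
      simpa using this
    rw [hsplit, hc]
    have hwi : S k / N ≤ (w k i)^2 := by
      rw [div_le_iff₀ hNpos]; linarith [hbound]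
    have : (8/9) * (S k / N) ≤ (8/9) * (w k i)^2 := by linarith
    have hexp : (1 - 8 / (9 * (N:ℝ))) * S k = S k - (8/9) * (S k / N) := by
      field_simp
    rw [hexp]; linarith
  have hSk : ∀ k, S k ≤ c ^ k * S 0 := by
    intro k
    induction k with
    | zero => simp
    | succ n ih =>
      calc S (n+1) ≤ c * S n := hstepS n
        _ ≤ c * (c ^ n * S 0) := by nlinarith
        _ = c ^ (n+1) * S 0 := by ring
  have hmain : ∀ k, diag k ≤ Real.sqrt c ^ k * diag 0 := by
    intro k
    rw [hdiag k, hdiag 0]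
    calc Real.sqrt (S k) ≤ Real.sqrt (c ^ k * S 0) := Real.sqrt_le_sqrt (hSk k)
      _ = Real.sqrt (c ^ k) * Real.sqrt (S 0) := Real.sqrt_mul (pow_nonneg hc0 k) _
      _ = Real.sqrt c ^ k * Real.sqrt (S 0) := by
          congr 1
          induction k with
          | zero => simp
          | succ n ih => rw [pow_succ, pow_succ, Real.sqrt_mul (pow_nonneg hc0 n), ih]
  refine ⟨hmain, ?_⟩
  have hr1 : Real.sqrt c < 1 := by
    have := Real.sqrt_lt_sqrt hc0 hc1
    simpa using this
  have hg : Tendsto (fun k => Real.sqrt c ^ k * diag 0) atTop (nhds 0) := by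
    have := (tendsto_pow_atTop_nhds_zero_of_lt_one (Real.sqrt_nonneg c) hr1).mul_const (diag 0)
    simpa using this
  exact squeeze_zero (fun k => (hdiag k) ▸ Real.sqrt_nonneg _) hmain hg
end

section
/- Let {(d_i, F_i)}_{i=1}^m with d_i > 0 represent a finite partition, and let t be an index such that d_t = max_i d_i and F_t ≤ F_j for every j with d_j = d_t. Then the hyperinterval D_t is nondominated in the sense that there exists K̃ > 0 with R_t(K̃) ≤ R_j(K̃) for all j, where R_i(K̃) = F_i − K̃ d_i. -/
theorem largest_with_smallest_F_is_nondominated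
    (m : ℕ) (F d : Fin m → ℝ) (hd : ∀ i, 0 < d i)
    (t : Fin m) (hmax : ∀ j, d j ≤ d t)
    (hmin : ∀ j, d j = d t → F t ≤ F j) :
    ∃ Ktilde > 0, ∀ j,
      F t - Ktilde * d t ≤ F j - Ktilde * d j := by
  set g : Fin m → ℝ := fun j => max 0 ((F t - F j) / (d t - d j)) with hg
  have hgnn : ∀ j, 0 ≤ g j := fun j => le_max_left _ _
  refine ⟨1 + ∑ j, g j, by positivity, fun j => ?_⟩
  have hK : g j ≤ 1 + ∑ i, g i := by
    have : g j ≤ ∑ i, g i :=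
      Finset.single_le_sum (fun i _ => hgnn i) (Finset.mem_univ j)
    linarith
  rcases eq_or_lt_of_le (hmax j) with heq | hlt
  · have := hmin j heq
    rw [heq]
    linarith
  · have hpos : 0 < d t - d j := by linarith
    have h1 : (F t - F j) / (d t - d j) ≤ 1 + ∑ i, g i :=
      le_trans (le_max_right _ _) hK
    have h2 : F t - F j ≤ (1 + ∑ i, g i) * (d t - d j) :=
      (div_le_iff₀ hpos).mp h1
    nlinarith
end
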